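/- arXiv:1812.02563 — 6 statements merged into one kernel-verified Lean document; each statement's English description precedes it below -/
import Mathlib

section
/- Let V, H be real inner product spaces with dim V = 3, and suppose J : V → End(H) satisfies the H-type condition. If z₁, z₂ ∈ V are orthonormal and z₃ ∈ V is such that (1/2)[J_{z₁}, J_{z₂}] = J_{z₃}, then z₁, z₂, z₃ is an orthonormal basis of V and J_{z₁}² = J_{z₂}² = J_{z₃}² = J_{z₁}J_{z₂}J_{z₃} = -Id_H, i.e., the subalgebra of End(H) generated by Id, J_{z₁}, J_{z₂}, J_{z₃} is isomorphic to the quaternions. -/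
open scoped RealInnerProductSpace

/-- If `dim V = 3`, `z₁, z₂` are orthonormal and `z₃` satisfies
`½[J_{z₁}, J_{z₂}] = J_{z₃}`, then `z₁, z₂, z₃` is an orthonormal basis of `V`,
`J_{z₁}² = J_{z₂}² = J_{z₃}² = J_{z₁}J_{z₂}J_{z₃} = -Id`, and the subalgebra of `End(H)`
generated by `Id, J_{z₁}, J_{z₂}, J_{z₃}` is isomorphic to the quaternions. -/
theorem htype_dim_three_quaternionic
    {V H : Type*} [NormedAddCommGroup V] [InnerProductSpace ℝ V] [FiniteDimensional ℝ V]
    [NormedAddCommGroup H] [InnerProductSpace ℝ H] [FiniteDimensional ℝ H] [Nontrivial H]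
    (hm : Module.finrank ℝ V = 3)
    (J : V →ₗ[ℝ] Module.End ℝ H)
    (hskew : ∀ (z : V) (x y : H), ⟪J z x, y⟫ = -⟪x, J z y⟫)
    (hanti : ∀ z w : V, J z * J w + J w * J z = algebraMap ℝ (Module.End ℝ H) (-2 * ⟪z, w⟫))
    (z₁ z₂ z₃ : V) (h₁ : ‖z₁‖ = 1) (h₂ : ‖z₂‖ = 1) (h₁₂ : ⟪z₁, z₂⟫ = 0)
    (h₃ : (2⁻¹ : ℝ) • (J z₁ * J z₂ - J z₂ * J z₁) = J z₃) :
    Orthonormal ℝ ![z₁, z₂, z₃] ∧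
      Submodule.span ℝ {z₁, z₂, z₃} = ⊤ ∧
      J z₁ * J z₁ = -1 ∧ J z₂ * J z₂ = -1 ∧ J z₃ * J z₃ = -1 ∧
      J z₁ * J z₂ * J z₃ = -1 ∧
      Nonempty (Algebra.adjoin ℝ {J z₁, J z₂, J z₃} ≃ₐ[ℝ] Quaternion ℝ) := by
  -- injectivity of algebraMap into End
  have hinj0 : ∀ r : ℝ, algebraMap ℝ (Module.End ℝ H) r = 0 → r = 0 := by
    intro r hr
    obtain ⟨x, hx⟩ := exists_ne (0 : H)
    have hx' := LinearMap.congr_fun hr x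
    simp only [Module.algebraMap_end_apply, LinearMap.zero_apply] at hx'
    rcases smul_eq_zero.mp hx' with h | h
    · exact h
    · exact absurd h hx
  have hsq : ∀ z : V, J z * J z = algebraMap ℝ (Module.End ℝ H) (-⟪z, z⟫) := by
    intro z
    have := hanti z z
    have h2 : (2 : ℝ) • (J z * J z) = algebraMap ℝ (Module.End ℝ H) (-2 * ⟪z, z⟫) := by
      rw [two_smul]; exact this
    have := congrArg (fun a => (2⁻¹ : ℝ) • a) h2
    simpa [smul_smul, Algebra.algebraMap_eq_smul_one, mul_assoc] using this
  have hz₁ : ⟪z₁, z₁⟫ = 1 := by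
    rw [real_inner_self_eq_norm_sq, h₁]; norm_num
  have hz₂ : ⟪z₂, z₂⟫ = 1 := by
    rw [real_inner_self_eq_norm_sq, h₂]; norm_num
  have e₁ : J z₁ * J z₁ = -1 := by
    rw [hsq, hz₁]; simp
  have e₂ : J z₂ * J z₂ = -1 := by
    rw [hsq, hz₂]; simp
  have hcomm : J z₂ * J z₁ = -(J z₁ * J z₂) := by
    have := hanti z₁ z₂
    rw [h₁₂] at this
    simp only [mul_zero, map_zero] at this
    linear_combination (norm := noncomm_ring) this
  have h₃' : J z₃ = J z₁ * J z₂ := by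
    rw [← h₃, hcomm]
    rw [sub_neg_eq_add, ← two_smul ℝ, smul_smul]
    norm_num
  have e₃ : J z₃ * J z₃ = -1 := by
    rw [h₃', show J z₁ * J z₂ * (J z₁ * J z₂) = J z₁ * (J z₂ * J z₁) * J z₂ by noncomm_ring,
      hcomm]
    rw [show J z₁ * -(J z₁ * J z₂) * J z₂ = -((J z₁ * J z₁) * (J z₂ * J z₂)) by noncomm_ring,
      e₁, e₂]
    norm_num
  have e₄ : J z₁ * J z₂ * J z₃ = -1 := by rw [← h₃', e₃]
  -- inner products with z₃
  have hz₃ : ⟪z₃, z₃⟫ = 1 := by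
    have := hsq z₃
    rw [e₃] at this
    have : algebraMap ℝ (Module.End ℝ H) (-⟪z₃, z₃⟫ - (-1)) = 0 := by
      rw [map_sub, ← this]; simp
    have := hinj0 _ this
    linarith
  have h₁₃ : ⟪z₁, z₃⟫ = 0 := by
    have key : J z₁ * J z₃ + J z₃ * J z₁ = 0 := by
      rw [h₃', mul_assoc, hcomm, mul_neg, add_neg_cancel]
    have := (hanti z₁ z₃).symm.trans key
    have := hinj0 _ this
    linarith [this]
  have h₂₃ : ⟪z₂, z₃⟫ = 0 := by
    have key : J z₂ * J z₃ + J z₃ * J z₂ = 0 := by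
      rw [h₃', show J z₂ * (J z₁ * J z₂) = J z₂ * J z₁ * J z₂ from (mul_assoc _ _ _).symm,
        hcomm, neg_mul, neg_add_cancel]
    have := (hanti z₂ z₃).symm.trans key
    have := hinj0 _ this
    linarith [this]
  have h₂₁ : ⟪z₂, z₁⟫ = 0 := by rw [real_inner_comm]; exact h₁₂
  have h₃₁ : ⟪z₃, z₁⟫ = 0 := by rw [real_inner_comm]; exact h₁₃
  have h₃₂ : ⟪z₃, z₂⟫ = 0 := by rw [real_inner_comm]; exact h₂₃
  -- orthonormality
  have horth : Orthonormal ℝ ![z₁, z₂, z₃] := by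
    rw [orthonormal_iff_ite]
    intro i j
    fin_cases i <;> fin_cases j <;>
      simp (config := { decide := true }) [Fin.ext_iff, hz₁, hz₂, hz₃, h₁₂, h₁₃, h₂₃,
        h₂₁, h₃₁, h₃₂, h₁, h₂, (by have := hz₃; rw [real_inner_self_eq_norm_sq] at this; nlinarith [norm_nonneg z₃] : ‖z₃‖ = 1)]
  -- span
  have hspan : Submodule.span ℝ {z₁, z₂, z₃} = ⊤ := by
    have hli := horth.linearIndependent
    have := hli.span_eq_top_of_card_eq_finrank (by simp [hm])
    have hr : Set.range ![z₁, z₂, z₃] = {z₁, z₂, z₃} := by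
      ext x
      simp [Matrix.range_cons, Matrix.range_empty]
      tauto
    rwa [hr] at this
  -- the quaternion basis
  have hn1 : ((-1 : ℝ) • (1 : Module.End ℝ H)) = -1 := by simp
  let Q : QuaternionAlgebra.Basis (Module.End ℝ H) (-1 : ℝ) (0 : ℝ) (-1 : ℝ) :=
    { i := J z₁, j := J z₂, k := J z₃
      i_mul_i := by rw [e₁, zero_smul, add_zero, hn1]
      j_mul_j := by rw [e₂, hn1]
      i_mul_j := h₃'.symm
      j_mul_i := by rw [hcomm, h₃', zero_smul, zero_sub] }
  let f : Quaternion ℝ →ₐ[ℝ] Module.End ℝ H := Q.liftHom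
  have hfi : f ⟨0, 1, 0, 0⟩ = J z₁ := by
    show Q.lift _ = _; simp [f, QuaternionAlgebra.Basis.liftHom, QuaternionAlgebra.Basis.lift, Q]
  have hfj : f ⟨0, 0, 1, 0⟩ = J z₂ := by
    show Q.lift _ = _; simp [f, QuaternionAlgebra.Basis.liftHom, QuaternionAlgebra.Basis.lift, Q]
  have hfk : f ⟨0, 0, 0, 1⟩ = J z₃ := by
    show Q.lift _ = _; simp [f, QuaternionAlgebra.Basis.liftHom, QuaternionAlgebra.Basis.lift, Q]
  have hfinj : Function.Injective f := f.toRingHom.injective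
  have hrange : f.range = Algebra.adjoin ℝ {J z₁, J z₂, J z₃} := by
    apply le_antisymm
    · rintro x ⟨q, rfl⟩
      show f q ∈ Algebra.adjoin ℝ {J z₁, J z₂, J z₃}
      have : f q = algebraMap ℝ (Module.End ℝ H) q.re + q.imI • J z₁ + q.imJ • J z₂
          + q.imK • J z₃ := by
        show Q.lift _ = _; simp [f, QuaternionAlgebra.Basis.liftHom, QuaternionAlgebra.Basis.lift, Q]
      rw [this]
      have m1 : J z₁ ∈ Algebra.adjoin ℝ {J z₁, J z₂, J z₃} :=
        Algebra.subset_adjoin (by simp)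
      have m2 : J z₂ ∈ Algebra.adjoin ℝ {J z₁, J z₂, J z₃} :=
        Algebra.subset_adjoin (by simp)
      have m3 : J z₃ ∈ Algebra.adjoin ℝ {J z₁, J z₂, J z₃} :=
        Algebra.subset_adjoin (by simp)
      exact add_mem (add_mem (add_mem (Subalgebra.algebraMap_mem _ _)
        (Subalgebra.smul_mem _ m1 _)) (Subalgebra.smul_mem _ m2 _))
        (Subalgebra.smul_mem _ m3 _)
    · apply Algebra.adjoin_le
      rintro x (rfl | rfl | rfl)
      exacts [⟨_, hfi⟩, ⟨_, hfj⟩, ⟨_, hfk⟩]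
  refine ⟨horth, hspan, e₁, e₂, e₃, e₄,
    ⟨((Subalgebra.equivOfEq _ _ hrange.symm).trans
      (AlgEquiv.ofInjective f hfinj).symm)⟩⟩
end

section
/- Let V, H be real inner product spaces with J : V → End(H) satisfying the H-type condition, and let T : H × H → V be the bilinear map defined by ⟨T(x,y), z⟩ = ⟨J_z x, y⟩ for all z ∈ V. Then for every x ∈ H and w ∈ V, T(x, J_w x) = ‖x‖² w. -/
open scoped RealInnerProductSpace

/-- If `T` is the bilinear map defined by `⟪T x y, z⟫ = ⟪J z x, y⟫`, then
`T x (J w x) = ‖x‖² w`. -/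
theorem htype_torsion_formula
    {V H : Type*} [NormedAddCommGroup V] [InnerProductSpace ℝ V] [FiniteDimensional ℝ V]
    [NormedAddCommGroup H] [InnerProductSpace ℝ H] [FiniteDimensional ℝ H]
    (J : V →ₗ[ℝ] H →ₗ[ℝ] H)
    (hskew : ∀ (z : V) (x y : H), ⟪J z x, y⟫ = -⟪x, J z y⟫)
    (hJ : ∀ (z : V) (x y : H), ⟪J z x, J z y⟫ = ‖z‖ ^ 2 * ⟪x, y⟫)
    (T : H →ₗ[ℝ] H →ₗ[ℝ] V)
    (hT : ∀ (x y : H) (z : V), ⟪T x y, z⟫ = ⟪J z x, y⟫) :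
    ∀ (x : H) (w : V), T x (J w x) = ‖x‖ ^ 2 • w := by
  intro x w
  have key : ∀ z : V, ⟪J z x, J w x⟫ = ⟪z, w⟫ * ‖x‖ ^ 2 := by
    intro z
    have h := hJ (z + w) x x
    simp only [map_add, LinearMap.add_apply, inner_add_add_self] at h
    have hz := hJ z x x
    have hw := hJ w x x
    have hnorm : ‖z + w‖ ^ 2 = ‖z‖ ^ 2 + 2 * ⟪z, w⟫ + ‖w‖ ^ 2 := by
      rw [← real_inner_self_eq_norm_sq, ← real_inner_self_eq_norm_sq,
        ← real_inner_self_eq_norm_sq, inner_add_add_self, real_inner_comm w z]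
      ring
    rw [hnorm, hz, hw, real_inner_self_eq_norm_sq] at h
    nlinarith [real_inner_self_eq_norm_sq x, real_inner_comm ((J w) x) ((J z) x)]
  apply ext_inner_right ℝ
  intro z
  rw [hT, key z, real_inner_smul_left, real_inner_comm w z]
  ring
end

section
/- Let V, H be finite-dimensional real inner product spaces with dim V = m ≥ 4, and J : V → End(H) satisfying the H-type condition. Then for any orthonormal vectors z_i, z_j, z_k ∈ V with pairwise distinct indices, the trace of J_{z_k} composed with (J_{z_i} J_{z_j}) on H is zero, i.e., Tr(J_{z_k} J_{z_i} J_{z_j}) = 0. -/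
open scoped RealInnerProductSpace

/-- If `dim V ≥ 4` and `zi, zj, zk` are orthonormal, then
`Tr(J_{z_k} J_{z_i} J_{z_j}) = 0`. -/
theorem htype_trace_triple_zero
    {V H : Type*} [NormedAddCommGroup V] [InnerProductSpace ℝ V] [FiniteDimensional ℝ V]
    [NormedAddCommGroup H] [InnerProductSpace ℝ H] [FiniteDimensional ℝ H]
    (J : V →ₗ[ℝ] H →ₗ[ℝ] H)
    (hskew : ∀ (z : V) (x y : H), ⟪J z x, y⟫ = -⟪x, J z y⟫)
    (hanti : ∀ (z w : V), J z ∘ₗ J w + J w ∘ₗ J z = (-2 * ⟪z, w⟫) • LinearMap.id)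
    (hm : 4 ≤ Module.finrank ℝ V)
    (zi zj zk : V) (hz : Orthonormal ℝ ![zi, zj, zk]) :
    LinearMap.trace ℝ H (J zk ∘ₗ J zi ∘ₗ J zj) = 0 := by
  classical
  -- find a unit vector `zs` orthogonal to `zi, zj, zk`
  set W : Submodule ℝ V := Submodule.span ℝ (Set.range ![zi, zj, zk]) with hW
  have hWne : Wᗮ ≠ ⊥ := by
    intro h
    have hWtop : W = ⊤ := Submodule.orthogonal_eq_bot_iff.mp h
    have := finrank_le_of_span_eq_top (v := ![zi, zj, zk]) hWtop
    simp [Fintype.card_fin] at this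
    omega
  obtain ⟨w, hwW, hw0⟩ := Submodule.exists_mem_ne_zero_of_ne_bot hWne
  set zs : V := ‖w‖⁻¹ • w with hzs
  have hnorm : ‖zs‖ = 1 := by
    rw [hzs, norm_smul, norm_inv, norm_norm]
    exact inv_mul_cancel₀ (norm_ne_zero_iff.mpr hw0)
  have hzss : ⟪zs, zs⟫ = 1 := by
    rw [real_inner_self_eq_norm_sq, hnorm]; norm_num
  have horth : ∀ u ∈ W, ⟪zs, u⟫ = 0 := by
    intro u hu
    have h := hwW u hu
    rw [hzs, real_inner_smul_left, real_inner_comm, h, mul_zero]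
  have hmem : ∀ n : Fin 3, (![zi, zj, zk] n) ∈ W := fun n =>
    Submodule.subset_span ⟨n, rfl⟩
  have hoi : ⟪zs, zi⟫ = 0 := horth _ (hmem 0)
  have hoj : ⟪zs, zj⟫ = 0 := horth _ (hmem 1)
  have hok : ⟪zs, zk⟫ = 0 := horth _ (hmem 2)
  -- move to the endomorphism ring
  set A : Module.End ℝ H := J zs with hA
  -- anticommutation of `A` with each `J z` for `z ⟂ zs`
  have anti : ∀ (z : V), ⟪zs, z⟫ = 0 → A * J z = -(J z * A) := by
    intro z hzz
    have h := hanti zs z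
    rw [hzz] at h
    have h0 : A * J z + J z * A = 0 := by
      simpa [hA, Module.End.mul_eq_comp] using h
    exact eq_neg_of_add_eq_zero_left h0
  have hi : A * J zi = -(J zi * A) := anti _ hoi
  have hj : A * J zj = -(J zj * A) := anti _ hoj
  have hk : A * J zk = -(J zk * A) := anti _ hok
  -- `A * A = -1`
  have hAA : A * A = -1 := by
    have h := hanti zs zs
    rw [hzss] at h
    have h2 : A * A + A * A = (-2 : ℝ) • (1 : Module.End ℝ H) := by
      simpa [hA, Module.End.mul_eq_comp, Module.End.one_eq_id] using h
    have h3 : (2 : ℝ) • (A * A) = (2 : ℝ) • (-1 : Module.End ℝ H) := by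
      rw [two_smul]
      rw [h2]
      simp [smul_smul]
    exact smul_right_injective (Module.End ℝ H) (two_ne_zero) h3
  set T : Module.End ℝ H := J zk * (J zi * J zj) with hT
  have key : A * T * A = T := by
    calc A * T * A = (A * J zk) * (J zi * (J zj * A)) := by
          rw [hT]; noncomm_ring
      _ = (-(J zk * A)) * (J zi * (J zj * A)) := by rw [hk]
      _ = -(J zk * ((A * J zi) * (J zj * A))) := by noncomm_ring
      _ = -(J zk * ((-(J zi * A)) * (J zj * A))) := by rw [hi]
      _ = J zk * (J zi * ((A * J zj) * A)) := by noncomm_ring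
      _ = J zk * (J zi * ((-(J zj * A)) * A)) := by rw [hj]
      _ = -(J zk * (J zi * (J zj * (A * A)))) := by noncomm_ring
      _ = -(J zk * (J zi * (J zj * (-1)))) := by rw [hAA]
      _ = T := by rw [hT]; noncomm_ring
  have tr1 : LinearMap.trace ℝ H T = LinearMap.trace ℝ H (A * (T * A)) := by
    rw [← mul_assoc, key]
  have tr2 : LinearMap.trace ℝ H (A * (T * A)) = - LinearMap.trace ℝ H T := by
    rw [LinearMap.trace_mul_comm, mul_assoc, hAA]
    simp
  have : LinearMap.trace ℝ H T = - LinearMap.trace ℝ H T := tr1.trans tr2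
  have hT0 : LinearMap.trace ℝ H T = 0 := by linarith
  simpa [hT, Module.End.mul_eq_comp] using hT0
end

section
/- Let V, H be finite-dimensional real inner product spaces with dim V = 3, J : V → End(H) satisfying the H-type condition, and z₁, z₂, z₃ an orthonormal basis of V. If J_{z₁}J_{z₂}J_{z₃} = ±Id_H, then the set {a·Id_H + J_z : a ∈ ℝ, z ∈ V} is a subalgebra of End(H) isomorphic as an ℝ-algebra to the quaternions ℍ. -/
open scoped RealInnerProductSpace

open Quaternion

/-- If `dim V = 3`, `z₁, z₂, z₃` is an orthonormal basis of `V` and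
`J_{z₁}J_{z₂}J_{z₃} = ±Id`, then `{a·Id + J_z : a ∈ ℝ, z ∈ V}` is a subalgebra of
`End(H)` isomorphic to the quaternions `ℍ`. -/
theorem htype_quaternionic_subalgebra
    {V H : Type*} [NormedAddCommGroup V] [InnerProductSpace ℝ V] [FiniteDimensional ℝ V]
    [NormedAddCommGroup H] [InnerProductSpace ℝ H] [FiniteDimensional ℝ H] [Nontrivial H]
    (hm : Module.finrank ℝ V = 3)
    (J : V →ₗ[ℝ] Module.End ℝ H)
    (hskew : ∀ (z : V) (x y : H), ⟪J z x, y⟫ = -⟪x, J z y⟫)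
    (hanti : ∀ z w : V, J z * J w + J w * J z = algebraMap ℝ (Module.End ℝ H) (-2 * ⟪z, w⟫))
    (z : Fin 3 → V) (hz : Orthonormal ℝ z)
    (hspan : Submodule.span ℝ (Set.range z) = ⊤)
    (hσ : J (z 0) * J (z 1) * J (z 2) = 1 ∨ J (z 0) * J (z 1) * J (z 2) = -1) :
    ∃ A : Subalgebra ℝ (Module.End ℝ H),
      (A : Set (Module.End ℝ H)) = {f | ∃ (a : ℝ) (w : V), f = a • (1 : Module.End ℝ H) + J w} ∧
        Nonempty (A ≃ₐ[ℝ] Quaternion ℝ) := by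
  have hinner := orthonormal_iff_ite.mp hz
  -- squares
  have hsq : ∀ i : Fin 3, J (z i) * J (z i) = (-1 : ℝ) • 1 := by
    intro i
    have h := hanti (z i) (z i)
    rw [hinner i i] at h
    simp only [if_true] at h
    have h2 : (2 : ℝ) • (J (z i) * J (z i)) = (2 : ℝ) • ((-1 : ℝ) • 1) := by
      rw [two_smul, h, Algebra.algebraMap_eq_smul_one, smul_smul]
      norm_num
    exact smul_right_injective _ (by norm_num : (2:ℝ) ≠ 0) h2
  have hac : ∀ i j : Fin 3, i ≠ j → J (z j) * J (z i) = -(J (z i) * J (z j)) := by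
    intro i j hij
    have h := hanti (z i) (z j)
    rw [hinner i j, if_neg hij] at h
    simp only [mul_zero, map_zero] at h
    exact eq_neg_of_add_eq_zero_right h
  -- k squared
  have hksq : (J (z 0) * J (z 1)) * (J (z 0) * J (z 1)) = (-1 : ℝ) • 1 := by
    have h10 := hac 0 1 (by decide)
    calc (J (z 0) * J (z 1)) * (J (z 0) * J (z 1))
        = J (z 0) * (J (z 1) * J (z 0)) * J (z 1) := by simp only [mul_assoc]
      _ = J (z 0) * (-(J (z 0) * J (z 1))) * J (z 1) := by rw [h10]
      _ = -((J (z 0) * J (z 0)) * (J (z 1) * J (z 1))) := by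
          simp only [mul_neg, neg_mul, mul_assoc]
      _ = (-1 : ℝ) • 1 := by
          rw [hsq 0, hsq 1]
          simp [smul_smul]
  -- J (z 2) = ε • (J (z 0) * J (z 1)) with ε = ±1
  obtain ⟨ε, hε, hk2⟩ : ∃ ε : ℝ, ε * ε = 1 ∧ J (z 2) = ε • (J (z 0) * J (z 1)) := by
    rcases hσ with h | h
    · refine ⟨-1, by norm_num, ?_⟩
      have := congrArg (fun y => (J (z 0) * J (z 1)) * y) h
      simp only [mul_one] at this
      rw [← mul_assoc, hksq, smul_mul_assoc, one_mul] at this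
      have : J (z 2) = -(J (z 0) * J (z 1)) := by
        have := congrArg (fun y => (-1 : ℝ) • y) this
        simpa [smul_smul] using this
      rw [this]; simp
    · refine ⟨1, by norm_num, ?_⟩
      have := congrArg (fun y => (J (z 0) * J (z 1)) * y) h
      simp only [mul_neg_one] at this
      rw [← mul_assoc, hksq, smul_mul_assoc, one_mul] at this
      have h2 : J (z 2) = J (z 0) * J (z 1) := by
        have := congrArg (fun y => (-1 : ℝ) • y) this
        simpa [smul_smul] using this
      rw [h2]; simp
  -- quaternionic basis
  set i : Module.End ℝ H := J (z 0) with hi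
  set j : Module.End ℝ H := J (z 1) with hj
  set k : Module.End ℝ H := J (z 0) * J (z 1) with hkdef
  let q : QuaternionAlgebra.Basis (Module.End ℝ H) (-1 : ℝ) (0 : ℝ) (-1 : ℝ) :=
    { i := i, j := j, k := k
      i_mul_i := by rw [zero_smul, add_zero]; exact hsq 0
      j_mul_j := hsq 1
      i_mul_j := rfl
      j_mul_i := by rw [zero_smul, zero_sub]; exact hac 0 1 (by decide) }
  let φ : Quaternion ℝ →ₐ[ℝ] Module.End ℝ H := q.liftHom
  have hφ : ∀ x : ℍ[ℝ], φ x = algebraMap ℝ _ x.re + x.imI • i + x.imJ • j + x.imK • k := by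
    intro x; rfl
  have hinj : Function.Injective φ := by
    have : Function.Injective (φ : ℍ[ℝ] →+* Module.End ℝ H) := RingHom.injective _
    exact this
  refine ⟨φ.range, ?_, ⟨(AlgEquiv.ofInjective φ hinj).symm⟩⟩
  ext f
  simp only [AlgHom.coe_range, Set.mem_range, Set.mem_setOf_eq, SetLike.mem_coe]
  constructor
  · rintro ⟨x, rfl⟩
    refine ⟨x.re, x.imI • z 0 + x.imJ • z 1 + (x.imK * ε) • z 2, ?_⟩
    rw [hφ]
    simp only [map_add, map_smul, Algebra.algebraMap_eq_smul_one]
    have : (x.imK * ε) • J (z 2) = x.imK • k := by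
      rw [hk2, smul_smul, mul_assoc, hε, mul_one]
    rw [this]
    abel
  · rintro ⟨a, w, rfl⟩
    let b : Module.Basis (Fin 3) ℝ V := Module.Basis.mk hz.linearIndependent (by rw [hspan])
    have hbz : ∀ n : Fin 3, b n = z n := fun n => by simp [b]
    have hw : w = b.repr w 0 • z 0 + b.repr w 1 • z 1 + b.repr w 2 • z 2 := by
      conv_lhs => rw [← b.sum_repr w]
      simp [Fin.sum_univ_three, hbz]
    refine ⟨(⟨a, b.repr w 0, b.repr w 1, b.repr w 2 * ε⟩ : ℍ[ℝ]), ?_⟩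
    refine (hφ _).trans ?_
    simp only [Algebra.algebraMap_eq_smul_one]
    have hk' : (b.repr w 2 * ε) • k = b.repr w 2 • J (z 2) := by
      rw [hk2, smul_smul]
    rw [hk']
    conv_rhs => rw [hw]
    simp only [map_add, map_smul]
    abel
end

section
/- Let V, H be finite-dimensional real inner product spaces with J : V → End(H) satisfying the H-type condition, m = dim V = 3, and let z₁,z₂,z₃ be an orthonormal basis of V with σ = J_{z₁}J_{z₂}J_{z₃} ≠ ±Id_H. Then H decomposes orthogonally as H⁺ ⊕ H⁻, where H^± are the ±1 eigenspaces of σ, both H⁺ and H⁻ are nonzero, and each is invariant under J_z for every z ∈ V. -/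
open scoped RealInnerProductSpace

/-- If `dim V = 3`, `z₁, z₂, z₃` is an orthonormal basis and
`σ = J_{z₁}J_{z₂}J_{z₃} ≠ ±Id`, then `H` splits orthogonally into the nonzero `±1`
eigenspaces of `σ`, each invariant under every `J_z`. -/
theorem htype_sigma_eigenspace_splitting
    {V H : Type*} [NormedAddCommGroup V] [InnerProductSpace ℝ V] [FiniteDimensional ℝ V]
    [NormedAddCommGroup H] [InnerProductSpace ℝ H] [FiniteDimensional ℝ H] [Nontrivial H]
    (hm : Module.finrank ℝ V = 3)
    (J : V →ₗ[ℝ] Module.End ℝ H)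
    (hskew : ∀ (z : V) (x y : H), ⟪J z x, y⟫ = -⟪x, J z y⟫)
    (hanti : ∀ z w : V, J z * J w + J w * J z = algebraMap ℝ (Module.End ℝ H) (-2 * ⟪z, w⟫))
    (z : Fin 3 → V) (hz : Orthonormal ℝ z)
    (hspan : Submodule.span ℝ (Set.range z) = ⊤)
    (hσ : J (z 0) * J (z 1) * J (z 2) ≠ 1 ∧ J (z 0) * J (z 1) * J (z 2) ≠ -1) :
    IsCompl (Module.End.eigenspace (J (z 0) * J (z 1) * J (z 2)) 1)
        (Module.End.eigenspace (J (z 0) * J (z 1) * J (z 2)) (-1)) ∧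
      (∀ x ∈ Module.End.eigenspace (J (z 0) * J (z 1) * J (z 2)) 1,
        ∀ y ∈ Module.End.eigenspace (J (z 0) * J (z 1) * J (z 2)) (-1), ⟪x, y⟫ = 0) ∧
      Module.End.eigenspace (J (z 0) * J (z 1) * J (z 2)) 1 ≠ ⊥ ∧
      Module.End.eigenspace (J (z 0) * J (z 1) * J (z 2)) (-1) ≠ ⊥ ∧
      (∀ w : V,
        Submodule.map (J w) (Module.End.eigenspace (J (z 0) * J (z 1) * J (z 2)) 1) ≤
          Module.End.eigenspace (J (z 0) * J (z 1) * J (z 2)) 1 ∧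
        Submodule.map (J w) (Module.End.eigenspace (J (z 0) * J (z 1) * J (z 2)) (-1)) ≤
          Module.End.eigenspace (J (z 0) * J (z 1) * J (z 2)) (-1)) := by
  have hortho := orthonormal_iff_ite.mp hz
  set a := J (z 0) with ha_def
  set b := J (z 1) with hb_def
  set c := J (z 2) with hc_def
  have hsq : ∀ i : Fin 3, J (z i) * J (z i) = -1 := by
    intro i
    have h := hanti (z i) (z i)
    rw [hortho i i] at h
    norm_num at h
    have h2 : J (z i) * J (z i) + J (z i) * J (z i) = (2 : ℝ) • (-1 : Module.End ℝ H) := by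
      rw [h, Algebra.algebraMap_eq_smul_one]; module
    have h3 : (2 : ℝ) • (J (z i) * J (z i)) = (2 : ℝ) • (-1 : Module.End ℝ H) := by
      rw [two_smul]; exact h2
    exact smul_right_injective (Module.End ℝ H) (two_ne_zero (α := ℝ)) h3
  have hswap : ∀ i j : Fin 3, i ≠ j → J (z i) * J (z j) = -(J (z j) * J (z i)) := by
    intro i j hij
    have h := hanti (z i) (z j)
    rw [hortho i j, if_neg hij] at h
    simp only [mul_zero, map_zero] at h
    exact eq_neg_of_add_eq_zero_left h
  have haa : a * a = -1 := hsq 0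
  have hbb : b * b = -1 := hsq 1
  have hcc : c * c = -1 := hsq 2
  have hba : b * a = -(a * b) := hswap 1 0 (by decide)
  have hca : c * a = -(a * c) := hswap 2 0 (by decide)
  have hcb : c * b = -(b * c) := hswap 2 1 (by decide)
  set σ := a * b * c with hσ_def
  -- σ² = 1
  have hσsq : σ * σ = 1 := by
    calc σ * σ = a * (b * ((c * a) * (b * c))) := by rw [hσ_def]; noncomm_ring
    _ = a * (b * ((-(a * c)) * (b * c))) := by rw [hca]
    _ = -(a * ((b * a) * (c * (b * c)))) := by noncomm_ring
    _ = -(a * ((-(a * b)) * (c * (b * c)))) := by rw [hba]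
    _ = (a * a) * (b * ((c * b) * c)) := by noncomm_ring
    _ = (a * a) * (b * ((-(b * c)) * c)) := by rw [hcb]
    _ = -((a * a) * ((b * b) * (c * c))) := by noncomm_ring
    _ = -((-1 : Module.End ℝ H) * ((-1) * (-1))) := by rw [haa, hbb, hcc]
    _ = 1 := by noncomm_ring
  -- commutation with generators
  have hcomm0 : σ * a = a * σ := by
    calc σ * a = (a * b) * (c * a) := by rw [hσ_def]; noncomm_ring
    _ = (a * b) * (-(a * c)) := by rw [hca]
    _ = -(a * ((b * a) * c)) := by noncomm_ring
    _ = -(a * ((-(a * b)) * c)) := by rw [hba]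
    _ = a * σ := by rw [hσ_def]; noncomm_ring
  have hcomm1 : σ * b = b * σ := by
    have h1 : σ * b = a * c := by
      calc σ * b = (a * b) * (c * b) := by rw [hσ_def]; noncomm_ring
      _ = (a * b) * (-(b * c)) := by rw [hcb]
      _ = -((a * (b * b)) * c) := by noncomm_ring
      _ = -((a * (-1 : Module.End ℝ H)) * c) := by rw [hbb]
      _ = a * c := by noncomm_ring
    have h2 : b * σ = a * c := by
      calc b * σ = (b * a) * (b * c) := by rw [hσ_def]; noncomm_ring
      _ = (-(a * b)) * (b * c) := by rw [hba]
      _ = -(a * ((b * b) * c)) := by noncomm_ring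
      _ = -(a * ((-1 : Module.End ℝ H) * c)) := by rw [hbb]
      _ = a * c := by noncomm_ring
    rw [h1, h2]
  have hcomm2 : σ * c = c * σ := by
    calc σ * c = a * (b * (c * c)) := by rw [hσ_def]; noncomm_ring
    _ = a * (b * (-1 : Module.End ℝ H)) := by rw [hcc]
    _ = (-1 : Module.End ℝ H) * (a * b) := by noncomm_ring
    _ = (c * c) * (a * b) := by rw [hcc]
    _ = c * ((c * a) * b) := by noncomm_ring
    _ = c * ((-(a * c)) * b) := by rw [hca]
    _ = -(c * (a * (c * b))) := by noncomm_ring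
    _ = -(c * (a * (-(b * c)))) := by rw [hcb]
    _ = c * σ := by rw [hσ_def]; noncomm_ring
  -- commutation with all J w
  have hcomm : ∀ w : V, σ * J w = J w * σ := by
    intro w
    have hw : w ∈ Submodule.span ℝ (Set.range z) := hspan ▸ Submodule.mem_top
    induction hw using Submodule.span_induction with
    | mem x hx =>
      obtain ⟨i, rfl⟩ := hx
      fin_cases i
      · exact hcomm0
      · exact hcomm1
      · exact hcomm2
    | zero => simp
    | add x y hx hy ihx ihy => rw [map_add, mul_add, add_mul, ihx, ihy]
    | smul r x hx ih => rw [map_smul, mul_smul_comm, smul_mul_assoc, ih]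
  -- self-adjointness
  have hrev : c * b * a = -σ := by
    calc c * b * a = (-(b * c)) * a := by rw [hcb]
    _ = -(b * (c * a)) := by noncomm_ring
    _ = -(b * (-(a * c))) := by rw [hca]
    _ = (b * a) * c := by noncomm_ring
    _ = (-(a * b)) * c := by rw [hba]
    _ = -σ := by rw [hσ_def]; noncomm_ring
  have hsa : ∀ x y : H, ⟪σ x, y⟫ = ⟪x, σ y⟫ := by
    intro x y
    have e1 : σ x = a (b (c x)) := by rw [hσ_def]; simp [Module.End.mul_apply]
    have e2 : (c * b * a) y = c (b (a y)) := by simp [Module.End.mul_apply]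
    rw [e1, hskew (z 0), hskew (z 1), hskew (z 2)]
    rw [← ha_def, ← hb_def, ← hc_def, ← e2, hrev]
    simp
  have hσm : ∀ x : H, σ (σ x) = x := by
    intro x
    have := congrArg (fun f : Module.End ℝ H => f x) hσsq
    simpa [Module.End.mul_apply] using this
  set E₁ := Module.End.eigenspace σ (1 : ℝ) with hE1
  set E₂ := Module.End.eigenspace σ (-1 : ℝ) with hE2
  have hmem1 : ∀ x : H, x ∈ E₁ ↔ σ x = x := by
    intro x; rw [hE1, Module.End.mem_eigenspace_iff, one_smul]
  have hmem2 : ∀ x : H, x ∈ E₂ ↔ σ x = -x := by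
    intro x; rw [hE2, Module.End.mem_eigenspace_iff]
    constructor <;> intro h <;> simpa using h
  have hp : ∀ x : H, (1/2 : ℝ) • (x + σ x) ∈ E₁ := by
    intro x
    rw [hmem1, map_smul, map_add, hσm]
    rw [add_comm]
  have hq : ∀ x : H, (1/2 : ℝ) • (x - σ x) ∈ E₂ := by
    intro x
    rw [hmem2, map_smul, map_sub, hσm, ← smul_neg, neg_sub]
  have hdecomp : ∀ x : H, x = (1/2 : ℝ) • (x + σ x) + (1/2 : ℝ) • (x - σ x) := by
    intro x; module
  have hcompl : IsCompl E₁ E₂ := by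
    constructor
    · rw [Submodule.disjoint_def]
      intro x h1 h2
      have e1 := (hmem1 x).mp h1
      have e2 := (hmem2 x).mp h2
      have : x = -x := by calc x = σ x := e1.symm
                            _ = -x := e2
      have h2x : x + x = 0 := by nth_rewrite 2 [this]; abel
      have h2s : (2 : ℝ) • x = 0 := by rw [two_smul]; exact h2x
      exact (smul_eq_zero.mp h2s).resolve_left (two_ne_zero (α := ℝ))
    · rw [codisjoint_iff, eq_top_iff]
      intro x _
      rw [hdecomp x]
      exact Submodule.add_mem_sup (hp x) (hq x)
  have hne1 : E₁ ≠ ⊥ := by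
    intro hbot
    apply hσ.2
    apply LinearMap.ext
    intro x
    have := hp x
    rw [hbot, Submodule.mem_bot] at this
    have hzero : x + σ x = 0 := (smul_eq_zero.mp this).resolve_left (by norm_num)
    have : σ x = -x := eq_neg_of_add_eq_zero_right hzero
    simpa using this
  have hne2 : E₂ ≠ ⊥ := by
    intro hbot
    apply hσ.1
    apply LinearMap.ext
    intro x
    have := hq x
    rw [hbot, Submodule.mem_bot] at this
    have hzero : x - σ x = 0 := (smul_eq_zero.mp this).resolve_left (by norm_num)
    have : σ x = x := (sub_eq_zero.mp hzero).symm
    simpa using this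
  have horth : ∀ x ∈ E₁, ∀ y ∈ E₂, ⟪x, y⟫ = 0 := by
    intro x hx y hy
    have e1 := (hmem1 x).mp hx
    have e2 := (hmem2 y).mp hy
    have : ⟪x, y⟫ = -⟪x, y⟫ := by
      calc ⟪x, y⟫ = ⟪σ x, y⟫ := by rw [e1]
      _ = ⟪x, σ y⟫ := hsa x y
      _ = -⟪x, y⟫ := by rw [e2, inner_neg_right]
    linarith
  have hinv : ∀ w : V, (Submodule.map (J w) E₁ ≤ E₁) ∧ (Submodule.map (J w) E₂ ≤ E₂) := by
    intro w
    have key : ∀ x : H, σ (J w x) = J w (σ x) := by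
      intro x
      have := congrArg (fun f : Module.End ℝ H => f x) (hcomm w)
      simpa [Module.End.mul_apply] using this
    constructor
    · rintro _ ⟨x, hx, rfl⟩
      have hx' := (hmem1 x).mp hx
      rw [hmem1, key, hx']
    · rintro _ ⟨x, hx, rfl⟩
      have hx' := (hmem2 x).mp hx
      rw [hmem2, key, hx', map_neg]
  exact ⟨hcompl, horth, hne1, hne2, hinv⟩
end

section
/- Let V be a finite-dimensional real inner product space, and let Ψ : V × V → Cl₂(V) be a bilinear map satisfying, for all u, v ∈ V: (1) Ψ(u,v) = -Ψ(v,u), and (2) Ψ(u,v)·v + v·Ψ(u,v) = 0 in Cl(V). Then there exists a (possibly point-independent) scalar function such that for orthonormal u ⊥ v, Ψ(u,v) is a scalar multiple of u·v; moreover if additionally the coefficient is independent of the orthonormal pair (u,v), then Ψ(u,v) = -κ(u·v + ⟨u,v⟩) for some κ ∈ ℝ and all u, v ∈ V. -/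
open scoped RealInnerProductSpace

/-- The quadratic form `u ↦ -‖u‖²`, giving the Clifford convention `u·u = -‖u‖²`. -/
noncomputable def negNormSq (V : Type*) [NormedAddCommGroup V] [InnerProductSpace ℝ V] :
    QuadraticForm ℝ V :=
  -(LinearMap.BilinMap.toQuadraticMap (innerₗ V))

/-- `Cl₂(V)`: the subspace of `Cl(V)` spanned by products `u·v` of orthogonal vectors. -/
noncomputable def Cl2 (V : Type*) [NormedAddCommGroup V] [InnerProductSpace ℝ V] :
    Submodule ℝ (CliffordAlgebra (negNormSq V)) :=
  Submodule.span ℝ {c | ∃ u v : V, ⟪u, v⟫ = 0 ∧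
    c = CliffordAlgebra.ι (negNormSq V) u * CliffordAlgebra.ι (negNormSq V) v}

section Auxiliary

open CliffordAlgebra

variable {V : Type*} [NormedAddCommGroup V] [InnerProductSpace ℝ V]

lemma negNormSq_apply (w : V) : negNormSq V w = -⟪w,w⟫ := by
  simp [negNormSq]

lemma ι_sq_unit (w : V) (hw : ‖w‖ = 1) :
    ι (negNormSq V) w * ι (negNormSq V) w = -1 := by
  rw [ι_sq_scalar, negNormSq_apply, real_inner_self_eq_norm_sq, hw]
  simp

lemma ι_anticomm {a b : V} (hab : ⟪a,b⟫ = 0) :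
    ι (negNormSq V) b * ι (negNormSq V) a = -(ι (negNormSq V) a * ι (negNormSq V) b) := by
  have h := CliffordAlgebra.ι_mul_ι_add_swap (Q := negNormSq V) a b
  have hp : QuadraticMap.polar (negNormSq V) a b = 0 := by
    simp only [QuadraticMap.polar, negNormSq_apply, inner_add_add_self]
    rw [real_inner_comm b a] at *
    rw [hab]; ring
  rw [hp, map_zero] at h
  exact eq_neg_of_add_eq_zero_right h

lemma quad_eq {A : Type*} [Ring A] [Algebra ℝ A] (U W C D : A)
    (hU : U*U = -1) (hW : W*W = -1) (hUW : W*U = -(U*W))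
    (hCU : C*U = -(U*C)) (hCW : C*W = -(W*C))
    (hDU : D*U = -(U*D)) (hDW : D*W = -(W*D)) (α β γ δ : ℝ) :
    (α•U + β•W + C) * (γ•U + δ•W + D)
      + U*((α•U + β•W + C) * (γ•U + δ•W + D))*U
      + W*((α•U + β•W + C) * (γ•U + δ•W + D))*W
      + U*(W*((α•U + β•W + C) * (γ•U + δ•W + D))*W)*U
      = (4*(α*δ - β*γ)) • (U*W) := by
  have hU' : ∀ x : A, U*(U*x) = -x := fun x => by rw [← mul_assoc, hU]; simp
  have hW' : ∀ x : A, W*(W*x) = -x := fun x => by rw [← mul_assoc, hW]; simp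
  have hUW' : ∀ x : A, W*(U*x) = -(U*(W*x)) := fun x => by
    rw [← mul_assoc, hUW]; simp [mul_assoc]
  have hCU' : ∀ x : A, C*(U*x) = -(U*(C*x)) := fun x => by
    rw [← mul_assoc, hCU]; simp [mul_assoc]
  have hCW' : ∀ x : A, C*(W*x) = -(W*(C*x)) := fun x => by
    rw [← mul_assoc, hCW]; simp [mul_assoc]
  have hDU' : ∀ x : A, D*(U*x) = -(U*(D*x)) := fun x => by
    rw [← mul_assoc, hDU]; simp [mul_assoc]
  have hDW' : ∀ x : A, D*(W*x) = -(W*(D*x)) := fun x => by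
    rw [← mul_assoc, hDW]; simp [mul_assoc]
  simp only [add_mul, mul_add, smul_mul_assoc, mul_smul_comm, mul_assoc, mul_neg, neg_mul,
    smul_neg, neg_neg, hU', hW', hUW', hCU', hCW', hDU', hDW', hU, hW, hUW, hCU, hCW, hDU, hDW,
    mul_one, mul_neg_one, smul_smul]
  module

/-- Part 1 core: an element of `Cl₂(V)` anticommuting with two orthonormal vectors `u, v`
is a scalar multiple of `ι u * ι v`. -/
lemma part1_aux (u v : V) (huv : ⟪u,v⟫ = 0) (hu : ‖u‖ = 1) (hv : ‖v‖ = 1)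
    (x : CliffordAlgebra (negNormSq V)) (hxmem : x ∈ Cl2 V)
    (hxW : x * ι (negNormSq V) v + ι (negNormSq V) v * x = 0)
    (hxU : x * ι (negNormSq V) u + ι (negNormSq V) u * x = 0) :
    ∃ c : ℝ, x = c • (ι (negNormSq V) u * ι (negNormSq V) v) := by
  set U := ι (negNormSq V) u with hUdef
  set W := ι (negNormSq V) v with hWdef
  have hU : U*U = -1 := ι_sq_unit u hu
  have hW : W*W = -1 := ι_sq_unit v hv
  have huu : (⟪u,u⟫:ℝ) = 1 := by rw [real_inner_self_eq_norm_sq, hu]; norm_num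
  have hvv : (⟪v,v⟫:ℝ) = 1 := by rw [real_inner_self_eq_norm_sq, hv]; norm_num
  have hvu : (⟪v,u⟫:ℝ) = 0 := by rw [real_inner_comm]; exact huv
  set LU : CliffordAlgebra (negNormSq V) →ₗ[ℝ] CliffordAlgebra (negNormSq V) :=
    (LinearMap.mulRight ℝ U).comp (LinearMap.mulLeft ℝ U) with hLU
  set LW : CliffordAlgebra (negNormSq V) →ₗ[ℝ] CliffordAlgebra (negNormSq V) :=
    (LinearMap.mulRight ℝ W).comp (LinearMap.mulLeft ℝ W) with hLW
  set Sq : CliffordAlgebra (negNormSq V) →ₗ[ℝ] CliffordAlgebra (negNormSq V) :=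
    LinearMap.id + LU + LW + LU.comp LW with hSq
  have hSq_apply : ∀ y, Sq y = y + U*y*U + W*y*W + U*(W*y*W)*U := by
    intro y
    simp [hSq, hLU, hLW, LinearMap.mulLeft_apply, LinearMap.mulRight_apply, mul_assoc]
  have key : ∀ a b : V, Sq (ι (negNormSq V) a * ι (negNormSq V) b) ∈
      Submodule.span ℝ {U*W} := by
    intro a b
    set c : V := a - ⟪u,a⟫•u - ⟪v,a⟫•v with hc
    set d : V := b - ⟪u,b⟫•u - ⟪v,b⟫•v with hd
    have hcu : (⟪u,c⟫:ℝ) = 0 := by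
      simp [hc, inner_sub_right, inner_smul_right, huu, huv, hu]
    have hcv : (⟪v,c⟫:ℝ) = 0 := by
      simp [hc, inner_sub_right, inner_smul_right, hvv, hvu, hv]
    have hdu : (⟪u,d⟫:ℝ) = 0 := by
      simp [hd, inner_sub_right, inner_smul_right, huu, huv, hu]
    have hdv : (⟪v,d⟫:ℝ) = 0 := by
      simp [hd, inner_sub_right, inner_smul_right, hvv, hvu, hv]
    have ha : ι (negNormSq V) a = ⟪u,a⟫•U + ⟪v,a⟫•W + ι (negNormSq V) c := by
      simp [hc, map_sub, map_smul]
      rw [hUdef, hWdef]; abel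
    have hb : ι (negNormSq V) b = ⟪u,b⟫•U + ⟪v,b⟫•W + ι (negNormSq V) d := by
      simp [hd, map_sub, map_smul]
      rw [hUdef, hWdef]; abel
    rw [ha, hb]
    have hq := quad_eq U W (ι (negNormSq V) c) (ι (negNormSq V) d) hU hW
      (ι_anticomm huv) (ι_anticomm hcu) (ι_anticomm hcv) (ι_anticomm hdu) (ι_anticomm hdv)
      ⟪u,a⟫ ⟪v,a⟫ ⟪u,b⟫ ⟪v,b⟫
    rw [hSq_apply, hq]
    exact Submodule.smul_mem _ _ (Submodule.mem_span_singleton_self _)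
  have hWx : W*x = -(x*W) := eq_neg_of_add_eq_zero_right hxW
  have hUx : U*x = -(x*U) := eq_neg_of_add_eq_zero_right hxU
  have hUxU : U*x*U = x := by
    rw [hUx, neg_mul, mul_assoc, hU]; simp
  have hWxW : W*x*W = x := by
    rw [hWx, neg_mul, mul_assoc, hW]; simp
  have hx4 : Sq x = (4:ℝ)•x := by
    rw [hSq_apply, hUxU, hWxW, hUxU]
    module
  have hspan : Sq x ∈ Submodule.span ℝ {U*W} := by
    have hle : Cl2 V ≤ Submodule.comap Sq (Submodule.span ℝ {U*W}) := by
      rw [Cl2]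
      apply Submodule.span_le.mpr
      rintro z ⟨a, b, hab, rfl⟩
      exact key a b
    exact hle hxmem
  rw [hx4] at hspan
  have hx' : x ∈ Submodule.span ℝ {U*W} := by
    have := Submodule.smul_mem _ ((4:ℝ)⁻¹) hspan
    rwa [smul_smul, inv_mul_cancel₀ (by norm_num : (4:ℝ) ≠ 0), one_smul] at this
  obtain ⟨r, hr⟩ := Submodule.mem_span_singleton.mp hx'
  exact ⟨r, hr.symm⟩

/-- Part 2 core: bilinear extension from orthonormal pairs. -/
lemma part2_aux {c : ℝ} (Ψ : V →ₗ[ℝ] V →ₗ[ℝ] CliffordAlgebra (negNormSq V))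
    (h1 : ∀ u v : V, Ψ u v = -Ψ v u)
    (hc : ∀ u v : V, ⟪u,v⟫ = 0 → ‖u‖ = 1 → ‖v‖ = 1 →
      Ψ u v = c • (ι (negNormSq V) u * ι (negNormSq V) v)) :
    ∀ u v : V, Ψ u v = c • (ι (negNormSq V) u * ι (negNormSq V) v + (⟪u,v⟫:ℝ) • 1) := by
  have diag : ∀ u : V, Ψ u u = 0 := by
    intro u
    have h2 : Ψ u u + Ψ u u = 0 := by nth_rewrite 1 [h1 u u]; exact neg_add_cancel _
    have h3 : (2:ℝ) • Ψ u u = 0 := by rw [two_smul]; exact h2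
    simpa using (smul_eq_zero.mp h3).resolve_left (by norm_num)
  have hperp : ∀ u v : V, ⟪u,v⟫ = 0 →
      Ψ u v = c • (ι (negNormSq V) u * ι (negNormSq V) v) := by
    intro u v huv
    by_cases hu0 : u = 0
    · simp [hu0]
    by_cases hv0 : v = 0
    · simp [hv0]
    have hnu : ‖u‖ ≠ 0 := norm_ne_zero_iff.mpr hu0
    have hnv : ‖v‖ ≠ 0 := norm_ne_zero_iff.mpr hv0
    set u₁ : V := ‖u‖⁻¹ • u with hu₁def
    set v₁ : V := ‖v‖⁻¹ • v with hv₁def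
    have hu₁ : ‖u₁‖ = 1 := by
      rw [hu₁def, norm_smul, norm_inv, norm_norm, inv_mul_cancel₀ hnu]
    have hv₁ : ‖v₁‖ = 1 := by
      rw [hv₁def, norm_smul, norm_inv, norm_norm, inv_mul_cancel₀ hnv]
    have huv₁ : (⟪u₁,v₁⟫:ℝ) = 0 := by
      rw [hu₁def, hv₁def, real_inner_smul_left, real_inner_smul_right, huv]
      ring
    have hu' : u = ‖u‖ • u₁ := (smul_inv_smul₀ hnu u).symm
    have hv' : v = ‖v‖ • v₁ := (smul_inv_smul₀ hnv v).symm
    calc Ψ u v = Ψ (‖u‖ • u₁) (‖v‖ • v₁) := by rw [← hu', ← hv']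
      _ = ‖u‖ • ‖v‖ • Ψ u₁ v₁ := by rw [map_smul, LinearMap.map_smul₂, smul_comm]
      _ = ‖u‖ • ‖v‖ • (c • (ι (negNormSq V) u₁ * ι (negNormSq V) v₁)) := by
          rw [hc u₁ v₁ huv₁ hu₁ hv₁]
      _ = c • (ι (negNormSq V) u * ι (negNormSq V) v) := by
          have e1 : ι (negNormSq V) u = ‖u‖ • ι (negNormSq V) u₁ := by
            conv_lhs => rw [hu', map_smul]
          have e2 : ι (negNormSq V) v = ‖v‖ • ι (negNormSq V) v₁ := by
            conv_lhs => rw [hv', map_smul]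
          rw [e1, e2, smul_mul_assoc, mul_smul_comm]
          module
  intro u v
  by_cases hu0 : u = 0
  · simp [hu0]
  have h0 : (⟪u,u⟫:ℝ) ≠ 0 := by
    rw [real_inner_self_eq_norm_sq]
    exact pow_ne_zero 2 (norm_ne_zero_iff.mpr hu0)
  set t : ℝ := ⟪u,v⟫ / ⟪u,u⟫ with ht
  set v' : V := v - t • u with hv'
  have huv' : (⟪u,v'⟫:ℝ) = 0 := by
    rw [hv', inner_sub_right, real_inner_smul_right, ht]
    rw [div_mul_cancel₀ _ h0, sub_self]
  have hvdecomp : v = t • u + v' := by rw [hv']; abel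
  have htuu : t * ⟪u,u⟫ = ⟪u,v⟫ := by rw [ht]; field_simp
  calc Ψ u v = Ψ u (t • u + v') := by rw [← hvdecomp]
    _ = t • Ψ u u + Ψ u v' := by rw [map_add, map_smul]
    _ = c • (ι (negNormSq V) u * ι (negNormSq V) v') := by
        rw [diag, smul_zero, zero_add, hperp u v' huv']
    _ = c • (ι (negNormSq V) u * ι (negNormSq V) v + (⟪u,v⟫:ℝ) • 1) := by
        congr 1
        rw [hvdecomp, map_add, map_smul, mul_add, mul_smul_comm, ι_sq_scalar,
          negNormSq_apply, Algebra.algebraMap_eq_smul_one, smul_smul,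
          mul_neg, htuu]
        rw [← hvdecomp]
        module

end Auxiliary

/-- A bilinear `Ψ : V × V → Cl₂(V)` which is skew-symmetric and satisfies
`Ψ(u,v)·v + v·Ψ(u,v) = 0` takes, on orthonormal pairs, values proportional to `u·v`;
and if the coefficient is independent of the orthonormal pair, then
`Ψ(u,v) = -κ(u·v + ⟨u,v⟩)` for some `κ ∈ ℝ` and all `u, v`. -/
theorem psi_classification
    {V : Type*} [NormedAddCommGroup V] [InnerProductSpace ℝ V] [FiniteDimensional ℝ V]
    (hm : 2 ≤ Module.finrank ℝ V)
    (Ψ : V →ₗ[ℝ] V →ₗ[ℝ] CliffordAlgebra (negNormSq V))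
    (hmem : ∀ u v : V, Ψ u v ∈ Cl2 V)
    (h1 : ∀ u v : V, Ψ u v = -Ψ v u)
    (h2 : ∀ u v : V,
      Ψ u v * CliffordAlgebra.ι (negNormSq V) v
        + CliffordAlgebra.ι (negNormSq V) v * Ψ u v = 0) :
    (∀ u v : V, ⟪u, v⟫ = 0 → ‖u‖ = 1 → ‖v‖ = 1 →
      ∃ c : ℝ, Ψ u v = c • (CliffordAlgebra.ι (negNormSq V) u *
        CliffordAlgebra.ι (negNormSq V) v)) ∧
    ((∃ c : ℝ, ∀ u v : V, ⟪u, v⟫ = 0 → ‖u‖ = 1 → ‖v‖ = 1 →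
        Ψ u v = c • (CliffordAlgebra.ι (negNormSq V) u *
          CliffordAlgebra.ι (negNormSq V) v)) →
      ∃ κ : ℝ, ∀ u v : V,
        Ψ u v = (-κ) • (CliffordAlgebra.ι (negNormSq V) u *
          CliffordAlgebra.ι (negNormSq V) v + (⟪u, v⟫ : ℝ) • 1)) := by
  constructor
  · intro u v huv hu hv
    have hxU : Ψ u v * CliffordAlgebra.ι (negNormSq V) u
        + CliffordAlgebra.ι (negNormSq V) u * Ψ u v = 0 := by
      have h := h2 v u
      rw [h1 v u] at h
      have h' : -(Ψ u v * CliffordAlgebra.ι (negNormSq V) u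
          + CliffordAlgebra.ι (negNormSq V) u * Ψ u v) = 0 := by
        rw [neg_add, ← neg_mul, ← mul_neg]; exact h
      exact neg_eq_zero.mp h'
    exact part1_aux u v huv hu hv (Ψ u v) (hmem u v) (h2 u v) hxU
  · rintro ⟨c, hc⟩
    refine ⟨-c, fun u v => ?_⟩
    rw [neg_neg]
    exact part2_aux Ψ h1 hc u v
end
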